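/- arXiv:2101.11452 — 5 statements merged into one kernel-verified Lean document; each statement's English description precedes it below -/
import Mathlib

section
/- Let 0 < r < 1 and let 𝜹 = {δ ∈ ℂ : |δ| ≤ r}. Then the set Θ = {log(1+δ) : δ ∈ 𝜹} (using the principal branch of the logarithm, which is well-defined since Re(1+δ) > 0) is a convex subset of ℂ. -/
open Complex Real Set

private lemma key_abs (z : ℂ) :
    ‖Complex.exp z - 1‖ ^ 2
      = Real.exp z.re ^ 2 - 2 * Real.exp z.re * Real.cos z.im + 1 := by
  rw [Complex.sq_norm, Complex.normSq_apply]
  simp only [Complex.sub_re, Complex.sub_im, Complex.exp_re, Complex.exp_im,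
    Complex.one_re, Complex.one_im]
  nlinarith [Real.sin_sq_add_cos_sq z.im]

private lemma mem_iff (r : ℝ) (hr0 : 0 < r) (hr1 : r < 1) (z : ℂ) :
    (∃ δ : ℂ, ‖δ‖ ≤ r ∧ z = Complex.log (1 + δ)) ↔
      |z.im| < π / 2 ∧
        Real.exp z.re + (1 - r ^ 2) * Real.exp (-z.re) ≤ 2 * Real.cos z.im := by
  constructor
  · rintro ⟨δ, hδ, rfl⟩
    have hre : 0 < (1 + δ).re := by
      have := Complex.abs_re_le_norm δ
      have := neg_abs_le δ.re
      simp only [Complex.add_re, Complex.one_re]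
      linarith
    have h0 : (1 + δ) ≠ 0 := by
      intro h; rw [h] at hre; simp at hre
    have hexp : Complex.exp (Complex.log (1 + δ)) = 1 + δ := Complex.exp_log h0
    have him : |(Complex.log (1 + δ)).im| < π / 2 := by
      rw [Complex.log_im]
      exact Complex.abs_arg_lt_pi_div_two_iff.2 (Or.inl hre)
    refine ⟨him, ?_⟩
    set z := Complex.log (1 + δ)
    have hsq : ‖Complex.exp z - 1‖ ^ 2
        = Real.exp z.re ^ 2 - 2 * Real.exp z.re * Real.cos z.im + 1 := key_abs z
    have hδeq : Complex.exp z - 1 = δ := by rw [hexp]; ring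
    rw [hδeq] at hsq
    have habs : ‖δ‖ ^ 2 ≤ r ^ 2 := by
      have := norm_nonneg δ
      nlinarith
    have hE : 0 < Real.exp z.re := Real.exp_pos _
    have hkey : Real.exp z.re ^ 2 + (1 - r ^ 2) ≤ 2 * Real.exp z.re * Real.cos z.im := by
      nlinarith
    rw [Real.exp_neg]
    calc Real.exp z.re + (1 - r ^ 2) * (Real.exp z.re)⁻¹
        = (Real.exp z.re ^ 2 + (1 - r ^ 2)) / Real.exp z.re := by field_simp
      _ ≤ (2 * Real.exp z.re * Real.cos z.im) / Real.exp z.re := by gcongr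
      _ = 2 * Real.cos z.im := by field_simp
  · rintro ⟨him, hf⟩
    refine ⟨Complex.exp z - 1, ?_, ?_⟩
    · have hsq := key_abs z
      have hE : 0 < Real.exp z.re := Real.exp_pos _
      have hEneg : Real.exp (-z.re) = (Real.exp z.re)⁻¹ := Real.exp_neg _
      rw [hEneg] at hf
      have hkey : Real.exp z.re ^ 2 + (1 - r ^ 2) ≤ 2 * Real.exp z.re * Real.cos z.im := by
        have h1 : (Real.exp z.re + (1 - r ^ 2) * (Real.exp z.re)⁻¹) * Real.exp z.re
            ≤ 2 * Real.cos z.im * Real.exp z.re :=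
          mul_le_mul_of_nonneg_right hf hE.le
        have h2 : (Real.exp z.re + (1 - r ^ 2) * (Real.exp z.re)⁻¹) * Real.exp z.re
            = Real.exp z.re ^ 2 + (1 - r ^ 2) := by field_simp
        linarith [h1, h2.symm.le]
      have habs : ‖Complex.exp z - 1‖ ^ 2 ≤ r ^ 2 := by nlinarith
      nlinarith [norm_nonneg (Complex.exp z - 1)]
    · have h1 : -π < z.im := by
        have := (abs_lt.1 him).1
        have hπ : 0 < π := Real.pi_pos
        linarith
      have h2 : z.im ≤ π := by
        have := (abs_lt.1 him).2
        have hπ : 0 < π := Real.pi_pos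
        linarith
      have : (1 : ℂ) + (Complex.exp z - 1) = Complex.exp z := by ring
      rw [this, Complex.log_exp h1 h2]

theorem stmt_0 (r : ℝ) (hr0 : 0 < r) (hr1 : r < 1) :
    Convex ℝ {z : ℂ | ∃ δ : ℂ, ‖δ‖ ≤ r ∧ z = Complex.log (1 + δ)} := by
  intro x hx y hy a b ha hb hab
  simp only [Set.mem_setOf_eq, mem_iff r hr0 hr1] at hx hy ⊢
  obtain ⟨hx1, hx2⟩ := hx
  obtain ⟨hy1, hy2⟩ := hy
  have hre : (a • x + b • y).re = a * x.re + b * y.re := by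
    simp [Complex.add_re, Complex.smul_re]
  have him : (a • x + b • y).im = a * x.im + b * y.im := by
    simp [Complex.add_im, Complex.smul_im]
  rw [hre, him]
  constructor
  · rcases eq_or_lt_of_le ha with h | h
    · have hb1 : b = 1 := by linarith
      simp [← h, hb1, hy1]
    · have h1 : |a * x.im + b * y.im| ≤ a * |x.im| + b * |y.im| := by
        calc |a * x.im + b * y.im| ≤ |a * x.im| + |b * y.im| := abs_add_le _ _
          _ = a * |x.im| + b * |y.im| := by
              rw [abs_mul, abs_mul, _root_.abs_of_nonneg ha, _root_.abs_of_nonneg hb]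
      have h2 : a * |x.im| < a * (π / 2) := by
        apply mul_lt_mul_of_pos_left hx1 h
      have h3 : b * |y.im| ≤ b * (π / 2) := by
        apply mul_le_mul_of_nonneg_left hy1.le hb
      have h4 : a * (π / 2) + b * (π / 2) = π / 2 := by rw [← add_mul, hab, one_mul]
      linarith
  · have hr2 : (0 : ℝ) ≤ 1 - r ^ 2 := by nlinarith
    have hexp1 : Real.exp (a * x.re + b * y.re) ≤ a * Real.exp x.re + b * Real.exp y.re := by
      have := convexOn_exp.2 (Set.mem_univ x.re) (Set.mem_univ y.re) ha hb hab
      simpa using this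
    have hexp2 : Real.exp (-(a * x.re + b * y.re))
        ≤ a * Real.exp (-x.re) + b * Real.exp (-y.re) := by
      have h := convexOn_exp.2 (Set.mem_univ (-x.re)) (Set.mem_univ (-y.re)) ha hb hab
      simp only [smul_eq_mul] at h
      rw [show -(a * x.re + b * y.re) = a * -x.re + b * -y.re from by ring]
      exact h
    have hxm : x.im ∈ Set.Icc (-(π / 2)) (π / 2) := by
      have := abs_lt.1 hx1
      exact ⟨this.1.le, this.2.le⟩
    have hym : y.im ∈ Set.Icc (-(π / 2)) (π / 2) := by
      have := abs_lt.1 hy1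
      exact ⟨this.1.le, this.2.le⟩
    have hcos : a * Real.cos x.im + b * Real.cos y.im
        ≤ Real.cos (a * x.im + b * y.im) := by
      have := strictConcaveOn_cos_Icc.concaveOn.2 hxm hym ha hb hab
      simpa using this
    nlinarith [mul_le_mul_of_nonneg_left hx2 ha, mul_le_mul_of_nonneg_left hy2 hb,
      mul_le_mul_of_nonneg_left hexp2 hr2]
end

section
/- Let n ≥ 1, 0 < r < 1, and let δ_1, …, δ_n ∈ ℂ with |δ_i| ≤ r for all i. Then there exists δ ∈ ℂ with |δ| ≤ r such that (1+δ)^n = ∏_{i=1}^n (1+δ_i). -/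
open Real Finset

theorem stmt_2 (n : ℕ) (hn : 1 ≤ n) (r : ℝ) (hr0 : 0 < r) (hr1 : r < 1)
    (δ : Fin n → ℂ) (hδ : ∀ i, ‖δ i‖ ≤ r) :
    ∃ d : ℂ, ‖d‖ ≤ r ∧ (1 + d) ^ n = ∏ i, (1 + δ i) := by
  have hr2 : 0 < 1 - r ^ 2 := by nlinarith
  set K : Set ℂ := {z | Real.exp z.re + (1 - r ^ 2) * Real.exp (-z.re)
      - 2 * Real.cos z.im ≤ 0 ∧ |z.im| ≤ π / 2} with hKdef
  -- membership criterion
  have hmem : ∀ z : ℂ,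
      (Real.exp z.re + (1 - r ^ 2) * Real.exp (-z.re) - 2 * Real.cos z.im ≤ 0)
        ↔ ‖Complex.exp z - 1‖ ≤ r := by
    intro z
    have hx : 0 < Real.exp z.re := Real.exp_pos _
    have hxx : Real.exp z.re * Real.exp (-z.re) = 1 := by
      rw [← Real.exp_add]; simp
    have habs : (‖Complex.exp z - 1‖) ^ 2
        = Real.exp z.re ^ 2 - 2 * Real.exp z.re * Real.cos z.im + 1 := by
      rw [Complex.sq_norm, Complex.normSq_apply]
      simp only [Complex.sub_re, Complex.sub_im, Complex.one_re, Complex.one_im,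
        Complex.exp_re, Complex.exp_im]
      nlinarith [Real.sin_sq_add_cos_sq z.im]
    constructor
    · intro h
      have h2 : (‖Complex.exp z - 1‖) ^ 2 ≤ r ^ 2 := by
        have := mul_le_mul_of_nonneg_left h hx.le
        nlinarith
      nlinarith [norm_nonneg (Complex.exp z - 1)]
    · intro h
      have h2 : (‖Complex.exp z - 1‖) ^ 2 ≤ r ^ 2 := by
        nlinarith [norm_nonneg (Complex.exp z - 1)]
      have hxinv : 0 < Real.exp (-z.re) := Real.exp_pos _
      nlinarith [mul_le_mul_of_nonneg_left (habs ▸ h2) hxinv.le]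
  -- convexity of K
  have hK : Convex ℝ K := by
    intro x hx y hy a b ha hb hab
    obtain ⟨hgx, hix⟩ := hx
    obtain ⟨hgy, hiy⟩ := hy
    have hre : (a • x + b • y).re = a * x.re + b * y.re := by
      simp [Complex.add_re, Complex.smul_re]
    have him : (a • x + b • y).im = a * x.im + b * y.im := by
      simp [Complex.add_im, Complex.smul_im]
    have he1 : Real.exp (a * x.re + b * y.re) ≤ a * Real.exp x.re + b * Real.exp y.re := by
      have := convexOn_exp.2 (Set.mem_univ x.re) (Set.mem_univ y.re) ha hb hab
      simpa using this
    have he2 : Real.exp (-(a * x.re + b * y.re))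
        ≤ a * Real.exp (-x.re) + b * Real.exp (-y.re) := by
      have := convexOn_exp.2 (Set.mem_univ (-x.re)) (Set.mem_univ (-y.re)) ha hb hab
      simpa [neg_add, mul_neg, add_comm] using this
    have hc : a * Real.cos x.im + b * Real.cos y.im ≤ Real.cos (a * x.im + b * y.im) := by
      have hmx : x.im ∈ Set.Icc (-(π / 2)) (π / 2) := by
        rcases abs_le.1 hix with ⟨h1, h2⟩; exact ⟨h1, h2⟩
      have hmy : y.im ∈ Set.Icc (-(π / 2)) (π / 2) := by
        rcases abs_le.1 hiy with ⟨h1, h2⟩; exact ⟨h1, h2⟩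
      have := strictConcaveOn_cos_Icc.concaveOn.2 hmx hmy ha hb hab
      simpa using this
    constructor
    · rw [hre, him]
      nlinarith [mul_le_mul_of_nonneg_left hgx ha, mul_le_mul_of_nonneg_left hgy hb]
    · rw [him]
      calc |a * x.im + b * y.im| ≤ |a * x.im| + |b * y.im| := abs_add_le _ _
        _ = a * |x.im| + b * |y.im| := by
            rw [abs_mul, abs_mul, abs_of_nonneg ha, abs_of_nonneg hb]
        _ ≤ a * (π / 2) + b * (π / 2) := by gcongr
        _ = π / 2 := by rw [← add_mul, hab, one_mul]
  -- the logs
  have hne : ∀ i, (1 : ℂ) + δ i ≠ 0 := by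
    intro i h
    have : ‖δ i‖ = 1 := by
      have : δ i = -1 := by linear_combination h
      simp [this]
    linarith [hδ i]
  set w : Fin n → ℂ := fun i => Complex.log (1 + δ i) with hwdef
  have hexpw : ∀ i, Complex.exp (w i) = 1 + δ i := fun i => Complex.exp_log (hne i)
  have hwK : ∀ i, w i ∈ K := by
    intro i
    constructor
    · rw [hmem]
      rw [hexpw i]
      simpa using hδ i
    · rw [hwdef]
      simp only [Complex.log_im]
      rw [Complex.abs_arg_le_pi_div_two_iff]
      have h2 : |(δ i).re| ≤ r := le_trans (Complex.abs_re_le_norm _) (hδ i)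
      have h3 := abs_le.1 h2
      simp only [Complex.add_re, Complex.one_re]
      linarith [h3.1]
  -- the average
  have hn0 : (0:ℝ) < (n : ℝ) := by exact_mod_cast hn
  set z : ℂ := ∑ i : Fin n, ((n : ℝ)⁻¹) • w i with hzdef
  have hzK : z ∈ K := by
    apply hK.sum_mem (fun i _ => by positivity)
    · rw [Finset.sum_const, Finset.card_univ, Fintype.card_fin, nsmul_eq_mul,
        mul_inv_cancel₀ (ne_of_gt hn0)]
    · exact fun i _ => hwK i
  refine ⟨Complex.exp z - 1, ?_, ?_⟩
  · rw [← hmem]; exact hzK.1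
  · have hsum : (n : ℂ) * z = ∑ i : Fin n, w i := by
      rw [hzdef, Finset.mul_sum]
      congr 1; funext i
      rw [Complex.real_smul]
      rw [← mul_assoc]
      have : (n:ℂ) * ((n:ℝ)⁻¹ : ℝ) = 1 := by
        push_cast
        exact mul_inv_cancel₀ (Nat.cast_ne_zero.2 (by omega))
      rw [this, one_mul]
    calc (1 + (Complex.exp z - 1)) ^ n = Complex.exp z ^ n := by ring
      _ = Complex.exp ((n : ℂ) * z) := (Complex.exp_nat_mul z n).symm
      _ = Complex.exp (∑ i : Fin n, w i) := by rw [hsum]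
      _ = ∏ i : Fin n, Complex.exp (w i) := Complex.exp_sum _ _
      _ = ∏ i, (1 + δ i) := by simp [hexpw]
end

section
/- Let 0 < r < 1 and let Θ = {log(1+δ) : δ ∈ ℂ, |δ| ≤ r} (principal logarithm). Then for any z_1, …, z_n ∈ Θ, the average (z_1 + ⋯ + z_n)/n belongs to Θ. -/
open Real Finset

private lemma theta_iff (r : ℝ) (hr0 : 0 < r) (hr1 : r < 1) (w : ℂ) :
    (∃ δ : ℂ, ‖δ‖ ≤ r ∧ w = Complex.log (1 + δ)) ↔
      (|w.im| < π / 2 ∧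
        Real.exp w.re + (1 - r ^ 2) * Real.exp (-w.re) ≤ 2 * Real.cos w.im) := by
  constructor
  · rintro ⟨δ, hδ, rfl⟩
    have hre : (0:ℝ) < (1 + δ).re := by
      have := Complex.abs_re_le_norm δ
      have h1 : |δ.re| ≤ r := le_trans (Complex.abs_re_le_norm δ) hδ
      have := abs_le.1 h1
      simp only [Complex.add_re, Complex.one_re]
      linarith
    have hne : (1 + δ) ≠ 0 := by
      intro h; rw [h] at hre; simp at hre
    have him : (Complex.log (1 + δ)).im = (1 + δ).arg := Complex.log_im _
    constructor
    · rw [him]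
      exact Complex.abs_arg_lt_pi_div_two_iff.2 (Or.inl hre)
    · set w := Complex.log (1 + δ) with hw
      have hexp : Complex.exp w = 1 + δ := Complex.exp_log hne
      have habs : ‖Complex.exp w - 1‖ ≤ r := by
        rw [hexp]; simpa using hδ
      have hsq : (‖Complex.exp w - 1‖) ^ 2 ≤ r ^ 2 :=
        pow_le_pow_left₀ (norm_nonneg _) habs 2
      rw [Complex.sq_norm, Complex.normSq_apply] at hsq
      have hER : (Complex.exp w - 1).re = Real.exp w.re * Real.cos w.im - 1 := by
        simp [Complex.exp_re]
      have hEI : (Complex.exp w - 1).im = Real.exp w.re * Real.sin w.im := by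
        simp [Complex.exp_im]
      rw [hER, hEI] at hsq
      have hs : Real.sin w.im ^ 2 + Real.cos w.im ^ 2 = 1 := Real.sin_sq_add_cos_sq _
      have hx : Real.exp w.re * Real.exp (-w.re) = 1 := by
        rw [← Real.exp_add]; simp
      have hxpos : 0 < Real.exp w.re := Real.exp_pos _
      have key : Real.exp w.re * (Real.exp w.re + (1 - r ^ 2) * Real.exp (-w.re)
          - 2 * Real.cos w.im) =
          Real.exp w.re ^ 2 + (1 - r ^ 2) - 2 * Real.exp w.re * Real.cos w.im := by
        calc Real.exp w.re * (Real.exp w.re + (1 - r ^ 2) * Real.exp (-w.re)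
              - 2 * Real.cos w.im)
            = Real.exp w.re ^ 2 + (1 - r ^ 2) * (Real.exp w.re * Real.exp (-w.re))
              - 2 * Real.exp w.re * Real.cos w.im := by ring
          _ = _ := by rw [hx]; ring
      by_contra hcon
      push_neg at hcon
      have hpos : 0 < Real.exp w.re * (Real.exp w.re + (1 - r ^ 2) * Real.exp (-w.re)
          - 2 * Real.cos w.im) := mul_pos hxpos (by linarith)
      rw [key] at hpos
      nlinarith [hsq, hs, sq_nonneg (Real.exp w.re)]
  · rintro ⟨h1, h2⟩
    refine ⟨Complex.exp w - 1, ?_, ?_⟩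
    · have hsq : (‖Complex.exp w - 1‖) ^ 2 ≤ r ^ 2 := by
        rw [Complex.sq_norm, Complex.normSq_apply]
        have hER : (Complex.exp w - 1).re = Real.exp w.re * Real.cos w.im - 1 := by
          simp [Complex.exp_re]
        have hEI : (Complex.exp w - 1).im = Real.exp w.re * Real.sin w.im := by
          simp [Complex.exp_im]
        rw [hER, hEI]
        have hs : Real.sin w.im ^ 2 + Real.cos w.im ^ 2 = 1 := Real.sin_sq_add_cos_sq _
        have hx : Real.exp w.re * Real.exp (-w.re) = 1 := by
          rw [← Real.exp_add]; simp
        have hxpos : 0 < Real.exp w.re := Real.exp_pos _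
        have key : Real.exp w.re * (Real.exp w.re + (1 - r ^ 2) * Real.exp (-w.re)
            - 2 * Real.cos w.im) =
            Real.exp w.re ^ 2 + (1 - r ^ 2) - 2 * Real.exp w.re * Real.cos w.im := by
          calc Real.exp w.re * (Real.exp w.re + (1 - r ^ 2) * Real.exp (-w.re)
                - 2 * Real.cos w.im)
              = Real.exp w.re ^ 2 + (1 - r ^ 2) * (Real.exp w.re * Real.exp (-w.re))
                - 2 * Real.exp w.re * Real.cos w.im := by ring
            _ = _ := by rw [hx]; ring
        have hle : Real.exp w.re * (Real.exp w.re + (1 - r ^ 2) * Real.exp (-w.re)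
            - 2 * Real.cos w.im) ≤ 0 :=
          mul_nonpos_of_nonneg_of_nonpos hxpos.le (by linarith)
        rw [key] at hle
        nlinarith [hs, sq_nonneg (Real.exp w.re)]
      exact (pow_le_pow_iff_left₀ (norm_nonneg _) hr0.le two_ne_zero).1 hsq
    · have hπ : π / 2 < π := by linarith [Real.pi_pos]
      have h1' := abs_lt.1 h1
      have : 1 + (Complex.exp w - 1) = Complex.exp w := by ring
      rw [this, Complex.log_exp (by linarith) (by linarith)]

theorem stmt_3 (r : ℝ) (hr0 : 0 < r) (hr1 : r < 1) (n : ℕ) (hn : 1 ≤ n)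
    (z : Fin n → ℂ)
    (hz : ∀ i, z i ∈ {w : ℂ | ∃ δ : ℂ, ‖δ‖ ≤ r ∧ w = Complex.log (1 + δ)}) :
    (∑ i, z i) / n ∈ {w : ℂ | ∃ δ : ℂ, ‖δ‖ ≤ r ∧ w = Complex.log (1 + δ)} := by
  have hnpos : (0:ℝ) < n := by exact_mod_cast hn
  have hP : ∀ i, |(z i).im| < π / 2 ∧
      Real.exp (z i).re + (1 - r ^ 2) * Real.exp (-(z i).re) ≤ 2 * Real.cos (z i).im :=
    fun i => (theta_iff r hr0 hr1 (z i)).1 (hz i)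
  rw [Set.mem_setOf_eq, theta_iff r hr0 hr1]
  set W := (∑ i, z i) / (n : ℂ) with hW
  have hWre : W.re = (∑ i, (z i).re) / n := by
    rw [hW, Complex.div_natCast_re, Complex.re_sum]
  have hWim : W.im = (∑ i, (z i).im) / n := by
    rw [hW, Complex.div_natCast_im, Complex.im_sum]
  -- weights
  set ω : Fin n → ℝ := fun _ => (n : ℝ)⁻¹ with hω
  have hω0 : ∀ i ∈ univ (α := Fin n), 0 ≤ ω i := fun i _ => by positivity
  have hω1 : ∑ i : Fin n, ω i = 1 := by
    simp [hω, Finset.card_univ]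
    field_simp
  have hre : W.re = ∑ i, ω i • (z i).re := by
    rw [hWre, Finset.sum_div]; simp [hω, smul_eq_mul, div_eq_mul_inv, mul_comm]
  have him : W.im = ∑ i, ω i • (z i).im := by
    rw [hWim, Finset.sum_div]; simp [hω, smul_eq_mul, div_eq_mul_inv, mul_comm]
  -- |W.im| < π/2
  have hIm : |W.im| < π / 2 := by
    rw [hWim, abs_div, abs_of_pos hnpos, div_lt_iff₀ hnpos]
    calc |∑ i, (z i).im| ≤ ∑ i, |(z i).im| := Finset.abs_sum_le_sum_abs _ _
      _ < ∑ _i : Fin n, π / 2 := by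
          apply Finset.sum_lt_sum_of_nonempty
          · exact Finset.univ_nonempty_iff.2 (Fin.pos_iff_nonempty.1 (by omega))
          · exact fun i _ => (hP i).1
      _ = π / 2 * n := by simp [mul_comm]
  refine ⟨hIm, ?_⟩
  -- Jensen for exp
  have hexp1 : Real.exp W.re ≤ ∑ i, ω i • Real.exp (z i).re := by
    rw [hre]
    exact convexOn_exp.map_sum_le hω0 hω1 (fun i _ => Set.mem_univ _)
  have hnegconv : ConvexOn ℝ Set.univ (fun x : ℝ => Real.exp (-x)) := by
    have := convexOn_exp.comp_affineMap (AffineMap.mk' (fun x : ℝ => -x) (-LinearMap.id) 0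
      (fun p => by simp))
    simpa [Function.comp_def] using this
  have hexp2 : Real.exp (-W.re) ≤ ∑ i, ω i • Real.exp (-(z i).re) := by
    rw [hre]
    exact hnegconv.map_sum_le hω0 hω1 (fun i _ => Set.mem_univ _)
  have hmem : ∀ i ∈ univ (α := Fin n), (z i).im ∈ Set.Icc (-(π/2)) (π/2) := by
    intro i _
    have := abs_lt.1 (hP i).1
    exact ⟨by linarith [this.1], by linarith [this.2]⟩
  have hcos : ∑ i, ω i • Real.cos (z i).im ≤ Real.cos W.im := by
    rw [him]
    exact strictConcaveOn_cos_Icc.concaveOn.le_map_sum hω0 hω1 hmem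
  have hsum : ∑ i, ω i • (Real.exp (z i).re + (1 - r ^ 2) * Real.exp (-(z i).re)) ≤
      ∑ i, ω i • (2 * Real.cos (z i).im) := by
    apply Finset.sum_le_sum
    intro i _
    exact smul_le_smul_of_nonneg_left (hP i).2 (hω0 i (Finset.mem_univ i))
  have h1r : (0:ℝ) ≤ 1 - r ^ 2 := by nlinarith
  calc Real.exp W.re + (1 - r ^ 2) * Real.exp (-W.re)
      ≤ (∑ i, ω i • Real.exp (z i).re) + (1 - r ^ 2) * ∑ i, ω i • Real.exp (-(z i).re) := by
        have := mul_le_mul_of_nonneg_left hexp2 h1r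
        linarith
    _ = ∑ i, ω i • (Real.exp (z i).re + (1 - r ^ 2) * Real.exp (-(z i).re)) := by
        rw [Finset.mul_sum, ← Finset.sum_add_distrib]
        congr 1; ext i; simp [smul_eq_mul]; ring
    _ ≤ ∑ i, ω i • (2 * Real.cos (z i).im) := hsum
    _ = 2 * ∑ i, ω i • Real.cos (z i).im := by
        rw [Finset.mul_sum]; congr 1; ext i; simp [smul_eq_mul]; ring
    _ ≤ 2 * Real.cos W.im := by linarith [hcos]
end

section
/- Let n be an odd positive integer, μ > 0, and h : ℂ → ℂ. A complex number s satisfies 1 + μ^n h(s)^n ∏_{i=1}^n (1+δ_i) = 0 for some complex δ_1,…,δ_n with |δ_i| ≤ r (where 0 < r < 1) if and only if there exists δ ∈ ℂ with |δ| ≤ r and an index k ∈ {1,…,n} such that λ_k h(s)(1+δ) = 1, where λ_k = μ e^{i(2k−1)π/n}. -/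
open Real Set

lemma sin_le_r_of_mem {r y : ℝ} (hr0 : 0 < r) (hr1 : r < 1)
    (hy : y ∈ Icc (-Real.arcsin r) (Real.arcsin r)) : |Real.sin y| ≤ r := by
  have ha0 : 0 < Real.arcsin r := Real.arcsin_pos.mpr hr0
  have ha2 : Real.arcsin r ≤ π / 2 := Real.arcsin_le_pi_div_two r
  have hsa : Real.sin (Real.arcsin r) = r := Real.sin_arcsin (by linarith) (by linarith)
  have hmono := Real.strictMonoOn_sin.monotoneOn
  have h1 : Real.sin y ≤ r := by
    have := hmono ⟨by linarith [hy.1], by linarith [hy.2]⟩ ⟨by linarith, ha2⟩ hy.2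
    rwa [hsa] at this
  have h2 : -r ≤ Real.sin y := by
    have := hmono ⟨by linarith, by linarith⟩ ⟨by linarith [hy.1], by linarith [hy.2]⟩ hy.1
    rwa [Real.sin_neg, hsa] at this
  rw [abs_le]; exact ⟨h2, h1⟩

lemma mul_nonneg_of_nonpos_nonpos' {a b : ℝ} (ha : a ≤ 0) (hb : b ≤ 0) : 0 ≤ a * b := by
  nlinarith

lemma aux_concave {r : ℝ} (hr0 : 0 < r) (hr1 : r < 1) :
    ConcaveOn ℝ (Icc (-Real.arcsin r) (Real.arcsin r))
      (fun y => Real.log (Real.cos y + Real.sqrt (r^2 - Real.sin y ^ 2))) := by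
  set a := Real.arcsin r with ha
  have ha0 : 0 < a := Real.arcsin_pos.mpr hr0
  have ha2 : a < π / 2 := Real.arcsin_lt_pi_div_two.mpr hr1
  have hsa : Real.sin a = r := Real.sin_arcsin (by linarith) (by linarith)
  have hcpos : ∀ y ∈ Icc (-a) a, 0 < Real.cos y := fun y hy =>
    Real.cos_pos_of_mem_Ioo ⟨by linarith [hy.1], by linarith [hy.2]⟩
  have hqnn : ∀ y : ℝ, 0 ≤ Real.sqrt (r^2 - Real.sin y ^ 2) := fun y => Real.sqrt_nonneg _
  have hpos : ∀ y ∈ Icc (-a) a, 0 < Real.cos y + Real.sqrt (r^2 - Real.sin y ^ 2) := by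
    intro y hy; have := hcpos y hy; have := hqnn y; linarith
  have hcont : ContinuousOn (fun y => Real.log (Real.cos y + Real.sqrt (r^2 - Real.sin y ^ 2)))
      (Icc (-a) a) := by
    apply ContinuousOn.log
    · exact (Real.continuous_cos.add (Real.continuous_sqrt.comp
        (continuous_const.sub (Real.continuous_sin.pow 2)))).continuousOn
    · intro y hy; exact (hpos y hy).ne'
  have hssq : ∀ y ∈ Ioo (-a) a, Real.sin y ^ 2 < r ^ 2 := by
    intro y hy
    have h1 : Real.sin y < r := by
      have := Real.strictMonoOn_sin ⟨by linarith [hy.1], by linarith [hy.2]⟩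
        ⟨by linarith, ha2.le⟩ hy.2
      rwa [hsa] at this
    have h2 : -r < Real.sin y := by
      have := Real.strictMonoOn_sin ⟨by linarith, by linarith⟩
        ⟨by linarith [hy.1], by linarith [hy.2]⟩ hy.1
      rwa [Real.sin_neg, hsa] at this
    nlinarith
  have hqpos : ∀ y ∈ Ioo (-a) a, 0 < Real.sqrt (r^2 - Real.sin y ^ 2) := by
    intro y hy
    exact Real.sqrt_pos.mpr (by linarith [hssq y hy])
  have hderiv : ∀ y ∈ Ioo (-a) a, HasDerivAt
      (fun y => Real.log (Real.cos y + Real.sqrt (r^2 - Real.sin y ^ 2)))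
      (-(Real.sin y / Real.sqrt (r^2 - Real.sin y ^ 2))) y := by
    intro y hy
    have hq := hqpos y hy
    have hc := hcpos y (Ioo_subset_Icc_self hy)
    have hinner : HasDerivAt (fun y => r^2 - Real.sin y ^ 2)
        (-(2 * Real.sin y ^ 1 * Real.cos y)) y :=
      (HasDerivAt.const_sub _ ((Real.hasDerivAt_sin y).pow 2))
    have hsqrt : HasDerivAt (fun y => Real.sqrt (r^2 - Real.sin y ^ 2))
        (-(2 * Real.sin y ^ 1 * Real.cos y) / (2 * Real.sqrt (r^2 - Real.sin y ^ 2))) y :=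
      hinner.sqrt (by nlinarith [hssq y hy] : r^2 - Real.sin y ^ 2 ≠ 0)
    have hadd := (Real.hasDerivAt_cos y).add hsqrt
    have hlog := hadd.log (hpos y (Ioo_subset_Icc_self hy)).ne'
    convert hlog using 1
    have hqne : Real.sqrt (r^2 - Real.sin y ^ 2) ≠ 0 := hq.ne'
    have hcq : Real.cos y + Real.sqrt (r^2 - Real.sin y ^ 2) ≠ 0 :=
      (hpos y (Ioo_subset_Icc_self hy)).ne'
    · rfl
    change -(Real.sin y / Real.sqrt (r^2 - Real.sin y ^ 2)) = _ / (Real.cos y + Real.sqrt (r^2 - Real.sin y ^ 2))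
    field_simp
    ring
  have hdiff : DifferentiableOn ℝ
      (fun y => Real.log (Real.cos y + Real.sqrt (r^2 - Real.sin y ^ 2))) (Ioo (-a) a) :=
    fun y hy => (hderiv y hy).differentiableAt.differentiableWithinAt
  have hanti : AntitoneOn (deriv
      (fun y => Real.log (Real.cos y + Real.sqrt (r^2 - Real.sin y ^ 2)))) (Ioo (-a) a) := by
    intro y₁ hy₁ y₂ hy₂ h12
    rw [(hderiv y₁ hy₁).deriv, (hderiv y₂ hy₂).deriv]
    set s₁ := Real.sin y₁; set s₂ := Real.sin y₂
    set q₁ := Real.sqrt (r^2 - s₁ ^ 2); set q₂ := Real.sqrt (r^2 - s₂ ^ 2)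
    have hq1 : 0 < q₁ := hqpos y₁ hy₁
    have hq2 : 0 < q₂ := hqpos y₂ hy₂
    have hq1s : q₁ ^ 2 = r^2 - s₁^2 := Real.sq_sqrt (by linarith [hssq y₁ hy₁])
    have hq2s : q₂ ^ 2 = r^2 - s₂^2 := Real.sq_sqrt (by linarith [hssq y₂ hy₂])
    have hs12 : s₁ ≤ s₂ := by
      rcases eq_or_lt_of_le h12 with rfl | hlt
      · exact le_refl _
      · exact (Real.strictMonoOn_sin ⟨by linarith [hy₁.1], by linarith [hy₁.2]⟩
          ⟨by linarith [hy₂.1], by linarith [hy₂.2]⟩ hlt).le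
    rw [neg_le_neg_iff, div_le_div_iff₀ hq1 hq2]
    -- goal : s₁ * q₂ ≤ s₂ * q₁
    rcases le_or_gt 0 s₁ with hs1 | hs1
    · have hsq : (s₁ * q₂)^2 ≤ (s₂ * q₁)^2 := by
        nlinarith [sq_nonneg r, mul_nonneg (add_nonneg hs1 (hs1.trans hs12)) (sub_nonneg.mpr hs12)]
      nlinarith [hsq, mul_nonneg hs1 hq2.le, mul_nonneg (hs1.trans hs12) hq1.le]
    · rcases le_or_gt 0 s₂ with hs2 | hs2
      · have h1 : s₁ * q₂ ≤ 0 := mul_nonpos_of_nonpos_of_nonneg hs1.le hq2.le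
        have h2 : 0 ≤ s₂ * q₁ := mul_nonneg hs2 hq1.le
        linarith
      · have hsq : (s₂ * q₁)^2 ≤ (s₁ * q₂)^2 := by
          nlinarith [sq_nonneg r, mul_nonneg_of_nonpos_nonpos' (show s₁ - s₂ ≤ 0 by linarith) (show s₁ + s₂ ≤ 0 by linarith), sq_nonneg (s₁+s₂), sq_nonneg (s₁-s₂)]
        nlinarith [hsq, mul_nonneg (neg_nonneg.mpr hs1.le) hq2.le,
          mul_nonneg (neg_nonneg.mpr hs2.le) hq1.le]
  refine AntitoneOn.concaveOn_of_deriv (convex_Icc _ _) hcont ?_ ?_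
  · rw [interior_Icc]; exact hdiff
  · rw [interior_Icc]; exact hanti

set_option maxHeartbeats 1000000 in
theorem stmt_6 (n : ℕ) (hn : Odd n) (hn1 : 0 < n) (μ : ℝ) (hμ : 0 < μ)
    (r : ℝ) (hr0 : 0 < r) (hr1 : r < 1) (h : ℂ → ℂ) (s : ℂ) :
    (∃ δ : Fin n → ℂ, (∀ i, ‖δ i‖ ≤ r) ∧
      1 + (μ : ℂ) ^ n * (h s) ^ n * ∏ i, (1 + δ i) = 0) ↔
    (∃ δ : ℂ, ‖δ‖ ≤ r ∧ ∃ k : Fin n,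
      ((μ : ℂ) * Complex.exp (Complex.I * (2 * ((k : ℕ) + 1) - 1) * Real.pi / n)) *
        h s * (1 + δ) = 1) := by
  have hπ : 0 < π := Real.pi_pos
  have hn0 : (n : ℂ) ≠ 0 := Nat.cast_ne_zero.mpr hn1.ne'
  set a := Real.arcsin r with ha
  have ha0 : 0 < a := Real.arcsin_pos.mpr hr0
  have ha2 : a < π / 2 := Real.arcsin_lt_pi_div_two.mpr hr1
  have hsa : Real.sin a = r := Real.sin_arcsin (by linarith) (by linarith)
  have hca : Real.cos a > 0 := Real.cos_pos_of_mem_Ioo ⟨by linarith, ha2⟩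
  constructor
  · rintro ⟨δ, hδ, heq⟩
    -- nonvanishing and basic data
    have hrepos : ∀ i, 0 < (1 + δ i).re := by
      intro i
      have h1 : |(δ i).re| ≤ r := le_trans (Complex.abs_re_le_norm _) (hδ i)
      have : (1 + δ i).re = 1 + (δ i).re := by simp
      rw [this]
      cases' abs_le.mp h1 with h2 _
      linarith
    have hne : ∀ i, (1 + δ i) ≠ 0 := by
      intro i h0
      have := hrepos i
      rw [h0] at this
      simp at this
    set w : Fin n → ℂ := fun i => Complex.log (1 + δ i) with hw
    set x : Fin n → ℝ := fun i => (w i).re with hx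
    set y : Fin n → ℝ := fun i => (w i).im with hy
    have habs : ∀ i, 0 < ‖1 + δ i‖ :=
      fun i => norm_pos_iff.mpr (hne i)
    have hexp : ∀ i, Real.exp (x i) = ‖1 + δ i‖ := by
      intro i
      simp only [hx, hw, Complex.log_re]
      exact Real.exp_log (habs i)
    have hcos : ∀ i, Real.exp (x i) * Real.cos (y i) = (1 + δ i).re := by
      intro i
      simp only [hy, hw, Complex.log_im]
      rw [hexp i, Complex.cos_arg (hne i), mul_comm, div_mul_cancel₀ _ (habs i).ne']
    have hK : ∀ i, Real.exp (x i)^2 - 2 * Real.exp (x i) * Real.cos (y i) + 1 ≤ r^2 := by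
      intro i
      have h1 : (‖δ i‖)^2 ≤ r^2 := by
        nlinarith [hδ i, norm_nonneg (δ i)]
      rw [Complex.sq_norm, Complex.normSq_apply] at h1
      have h2 : Real.exp (x i)^2 = (1 + δ i).re^2 + (1 + δ i).im^2 := by
        rw [hexp i, Complex.sq_norm, Complex.normSq_apply]; ring
      have h3 := hcos i
      have h4 : (1 + δ i).re = 1 + (δ i).re := by simp
      have h5 : (1 + δ i).im = (δ i).im := by simp
      rw [h4, h5] at h2
      rw [h4] at h3
      nlinarith [h1, h2, h3]
    have hcpos : ∀ i, 0 < Real.cos (y i) := by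
      intro i
      have h1 := hrepos i
      have h2 := hcos i
      nlinarith [Real.exp_pos (x i)]
    have hsin : ∀ i, Real.sin (y i)^2 ≤ r^2 := by
      intro i
      nlinarith [hK i, sq_nonneg (Real.exp (x i) - Real.cos (y i)),
        Real.sin_sq_add_cos_sq (y i)]
    have hy2 : ∀ i, |y i| < π / 2 := by
      intro i
      simp only [hy, hw, Complex.log_im]
      exact Complex.abs_arg_lt_pi_div_two_iff.mpr (Or.inl (hrepos i))
    have hsinr : ∀ i, -r ≤ Real.sin (y i) ∧ Real.sin (y i) ≤ r := by
      intro i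
      constructor <;> nlinarith [hsin i]
    have hya : ∀ i, y i ∈ Set.Icc (-a) a := by
      intro i
      have h1 := abs_lt.mp (hy2 i)
      have harc : Real.arcsin (Real.sin (y i)) = y i :=
        Real.arcsin_sin (by linarith [h1.1]) (by linarith [h1.2])
      have hmono := Real.strictMonoOn_arcsin.monotoneOn
      constructor
      · have := hmono (Set.mem_Icc.mpr ⟨by linarith, by linarith⟩)
          (Set.mem_Icc.mpr ⟨by linarith [Real.neg_one_le_sin (y i)],
            Real.sin_le_one (y i)⟩) (hsinr i).1
        rwa [Real.arcsin_neg, harc] at this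
      · have := hmono (Set.mem_Icc.mpr ⟨Real.neg_one_le_sin (y i),
          Real.sin_le_one (y i)⟩) (Set.mem_Icc.mpr ⟨by linarith, by linarith⟩) (hsinr i).2
        rwa [harc] at this
    -- bounds x i vs u (y i)
    set u : ℝ → ℝ := fun t => Real.log (Real.cos t + Real.sqrt (r^2 - Real.sin t ^ 2)) with hu
    have hqdef : ∀ t : ℝ, Real.sin t ^2 ≤ r^2 →
        (Real.sqrt (r^2 - Real.sin t^2))^2 = r^2 - Real.sin t^2 :=
      fun t ht => Real.sq_sqrt (by linarith)
    have hEc : ∀ i, (Real.exp (x i) - Real.cos (y i))^2 ≤ r^2 - Real.sin (y i)^2 := by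
      intro i
      nlinarith [hK i, Real.sin_sq_add_cos_sq (y i)]
    have hcqpos : ∀ i, 0 < Real.cos (y i) + Real.sqrt (r^2 - Real.sin (y i)^2) := by
      intro i
      have := Real.sqrt_nonneg (r^2 - Real.sin (y i)^2)
      linarith [hcpos i]
    have hxu : ∀ i, x i ≤ u (y i) := by
      intro i
      have h1 : Real.exp (x i) ≤ Real.cos (y i) + Real.sqrt (r^2 - Real.sin (y i)^2) := by
        nlinarith [hEc i, hqdef (y i) (hsin i), Real.sqrt_nonneg (r^2 - Real.sin (y i)^2)]
      have := Real.log_le_log (Real.exp_pos (x i)) h1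
      rwa [Real.log_exp] at this
    have hxl : ∀ i, Real.log (1 - r^2) ≤ x i + u (y i) := by
      intro i
      have h1 : Real.cos (y i) - Real.sqrt (r^2 - Real.sin (y i)^2) ≤ Real.exp (x i) := by
        nlinarith [hEc i, hqdef (y i) (hsin i), Real.sqrt_nonneg (r^2 - Real.sin (y i)^2)]
      have h2 : 1 - r^2 ≤ Real.exp (x i) * (Real.cos (y i) + Real.sqrt (r^2 - Real.sin (y i)^2)) := by
        nlinarith [mul_le_mul_of_nonneg_right h1 (hcqpos i).le, hqdef (y i) (hsin i),
          Real.sin_sq_add_cos_sq (y i)]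
      have h3 := Real.log_le_log (by nlinarith : (0:ℝ) < 1 - r^2) h2
      rwa [Real.log_mul (Real.exp_pos (x i)).ne' (hcqpos i).ne', Real.log_exp] at h3
    -- averages
    set X := (∑ i, x i) / n with hX
    set Y := (∑ i, y i) / n with hY
    have hnR : (0:ℝ) < n := Nat.cast_pos.mpr hn1
    have hYmem : Y ∈ Set.Icc (-a) a := by
      constructor
      · rw [hY, le_div_iff₀ hnR]
        calc -a * n = ∑ _i : Fin n, (-a) := by
              simp [Finset.card_univ, mul_comm]
          _ ≤ ∑ i, y i := Finset.sum_le_sum (fun i _ => (hya i).1)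
      · rw [hY, div_le_iff₀ hnR]
        calc ∑ i, y i ≤ ∑ _i : Fin n, a := Finset.sum_le_sum (fun i _ => (hya i).2)
          _ = a * n := by simp [Finset.card_univ, mul_comm]
    have hconc : ConcaveOn ℝ (Set.Icc (-a) a) u := aux_concave hr0 hr1
    have hwsum : ∑ _i : Fin n, (1/n : ℝ) = 1 := by
      rw [Finset.sum_const, Finset.card_univ, Fintype.card_fin, nsmul_eq_mul]
      field_simp
    have hsumy : ∑ i, (1/n : ℝ) • y i = Y := by
      simp only [smul_eq_mul, hY]
      rw [Finset.sum_div]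
      exact Finset.sum_congr rfl (fun i _ => by ring)
    have hJ : ∑ i, (1/n : ℝ) * u (y i) ≤ u Y := by
      have := hconc.le_map_sum (t := Finset.univ) (w := fun _ => (1/n : ℝ)) (p := y)
        (fun i _ => by positivity) hwsum (fun i _ => hya i)
      simp only [smul_eq_mul] at this hsumy
      rwa [hsumy] at this
    have hXu : X ≤ u Y := by
      calc X = ∑ i, (1/n : ℝ) * x i := by
            rw [hX, Finset.sum_div]
            exact Finset.sum_congr rfl (fun i _ => by ring)
        _ ≤ ∑ i, (1/n : ℝ) * u (y i) :=
            Finset.sum_le_sum (fun i _ => by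
              have := hxu i
              have : (1/n : ℝ) * x i ≤ (1/n : ℝ) * u (y i) :=
                mul_le_mul_of_nonneg_left this (by positivity)
              exact this)
        _ ≤ u Y := hJ
    have hXl : Real.log (1 - r^2) - u Y ≤ X := by
      have hJ2 : Real.log (1 - r^2) - u Y ≤ ∑ i, (1/n : ℝ) * (Real.log (1 - r^2) - u (y i)) := by
        have h4 : ∑ i, (1/n : ℝ) * (Real.log (1 - r^2) - u (y i))
            = Real.log (1 - r^2) - ∑ i, (1/n : ℝ) * u (y i) := by
          simp only [mul_sub]
          rw [Finset.sum_sub_distrib, ← Finset.sum_mul, hwsum, one_mul]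
        rw [h4]
        linarith [hJ]
      have h3 : ∑ i, (1/n : ℝ) * (Real.log (1 - r^2) - u (y i)) ≤ X := by
        calc ∑ i, (1/n : ℝ) * (Real.log (1 - r^2) - u (y i))
            ≤ ∑ i, (1/n : ℝ) * x i :=
              Finset.sum_le_sum (fun i _ => mul_le_mul_of_nonneg_left
                (by linarith [hxl i]) (by positivity))
          _ = X := by
              rw [hX, Finset.sum_div]
              exact Finset.sum_congr rfl (fun i _ => by ring)
      linarith
    -- construct the root
    set W := Complex.exp ((X : ℂ) + (Y : ℂ) * Complex.I) with hWdef
    have hWre : W.re = Real.exp X * Real.cos Y := by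
      rw [hWdef, Complex.exp_re]; simp
    have hWim : W.im = Real.exp X * Real.sin Y := by
      rw [hWdef, Complex.exp_im]; simp
    have hsY : |Real.sin Y| ≤ r := sin_le_r_of_mem hr0 hr1 hYmem
    have hcY : 0 < Real.cos Y :=
      Real.cos_pos_of_mem_Ioo ⟨by linarith [hYmem.1], by linarith [hYmem.2]⟩
    have hsY2 : Real.sin Y ^2 ≤ r^2 := by nlinarith [abs_nonneg (Real.sin Y), sq_abs (Real.sin Y)]
    have hqY : (Real.sqrt (r^2 - Real.sin Y^2))^2 = r^2 - Real.sin Y^2 :=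
      Real.sq_sqrt (by linarith)
    have hcqY : 0 < Real.cos Y + Real.sqrt (r^2 - Real.sin Y^2) := by
      have := Real.sqrt_nonneg (r^2 - Real.sin Y^2); linarith
    have hEX1 : Real.exp X ≤ Real.cos Y + Real.sqrt (r^2 - Real.sin Y^2) := by
      have := Real.exp_le_exp.mpr hXu
      rwa [show Real.exp (u Y) = Real.cos Y + Real.sqrt (r^2 - Real.sin Y^2) from
        Real.exp_log hcqY] at this
    have hEX2 : Real.cos Y - Real.sqrt (r^2 - Real.sin Y^2) ≤ Real.exp X := by
      have h1 := Real.exp_le_exp.mpr hXl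
      rw [Real.exp_sub, Real.exp_log (by nlinarith : (0:ℝ) < 1 - r^2),
        show Real.exp (u Y) = Real.cos Y + Real.sqrt (r^2 - Real.sin Y^2) from
          Real.exp_log hcqY] at h1
      rw [div_le_iff₀ hcqY] at h1
      nlinarith [Real.sin_sq_add_cos_sq Y]
    have habsW : ‖W - 1‖ ≤ r := by
      have h2 : (‖W - 1‖)^2 ≤ r^2 := by
        rw [Complex.sq_norm, Complex.normSq_apply]
        simp only [Complex.sub_re, Complex.sub_im, Complex.one_re, Complex.one_im,
          hWre, hWim]
        nlinarith [Real.sin_sq_add_cos_sq Y, hEX1, hEX2, hqY,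
          mul_le_mul_of_nonneg_right hEX1 (Real.exp_pos X).le]
      nlinarith [norm_nonneg (W - 1)]
    have hWn : W ^ n = ∏ i, (1 + δ i) := by
      have h1 : ∑ i, w i = ((∑ i, x i : ℝ) : ℂ) + ((∑ i, y i : ℝ) : ℂ) * Complex.I := by
        have h2 : ∀ i, w i = ((x i : ℝ) : ℂ) + ((y i : ℝ) : ℂ) * Complex.I :=
          fun i => (Complex.re_add_im (w i)).symm
        rw [Finset.sum_congr rfl (fun i _ => h2 i), Finset.sum_add_distrib,
          ← Finset.sum_mul]
        push_cast
        ring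
      have h3 : (n : ℂ) * ((X : ℂ) + (Y : ℂ) * Complex.I) = ∑ i, w i := by
        rw [h1, hX, hY]
        push_cast
        field_simp
      rw [hWdef, ← Complex.exp_nat_mul, h3, Complex.exp_sum]
      exact Finset.prod_congr rfl (fun i _ => Complex.exp_log (hne i))
    have hζ : ((μ : ℂ) * h s * W) ^ n = -1 := by
      rw [mul_pow, mul_pow, hWn]
      linear_combination heq
    haveI : NeZero n := ⟨hn1.ne'⟩
    have hζ1 : (-((μ : ℂ) * h s * W)) ^ n = 1 := by
      rw [hn.neg_pow, hζ, neg_neg]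
    obtain ⟨i, hi, hpow⟩ :=
      (Complex.isPrimitiveRoot_exp n hn1.ne').eq_pow_of_pow_eq_one hζ1
    obtain ⟨m, hm⟩ := hn
    set k : ℕ := (m + n - i) % n with hk
    have hkn : k < n := Nat.mod_lt _ hn1
    have hkt : ∃ t : ℤ, (k : ℤ) + i = m + n * t := by
      refine ⟨1 - ((m + n - i) / n : ℕ), ?_⟩
      have h1 := Nat.div_add_mod (m + n - i) n
      have h2 : i ≤ m + n := by omega
      have h3 : (((m + n - i) : ℕ) : ℤ) = (m : ℤ) + n - i := by omega
      have h4 : ((n : ℤ)) * ((m + n - i) / n : ℕ) + (k : ℤ) = (m : ℤ) + n - i := by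
        rw [← h3]; exact_mod_cast h1
      linarith [h4]
    obtain ⟨t, ht⟩ := hkt
    refine ⟨W - 1, habsW, ⟨k, hkn⟩, ?_⟩
    have h1plus : (1 : ℂ) + (W - 1) = W := by ring
    rw [h1plus]
    have hζeq : (μ : ℂ) * h s * W = -Complex.exp ((i : ℂ) * (2 * π * Complex.I / n)) := by
      rw [Complex.exp_nat_mul]
      linear_combination hpow
    have hcast : ((k : ℕ) : ℂ) + (i : ℂ) = (m : ℂ) + (n : ℂ) * (t : ℂ) := by
      exact_mod_cast ht
    have hncast : (n : ℂ) = 2 * m + 1 := by exact_mod_cast hm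
    have harg : Complex.I * (2 * (((⟨k, hkn⟩ : Fin n) : ℕ) + 1) - 1) * π / n +
        (i : ℂ) * (2 * π * Complex.I / n) = π * Complex.I + (t : ℂ) * (2 * π * Complex.I) := by
      simp only [Fin.val_mk]
      calc _ = (Complex.I * π * (2 * ((k:ℂ) + i) + 1)) / n := by ring
        _ = _ := by
          rw [div_eq_iff hn0]
          linear_combination (2 * (π:ℂ) * Complex.I) * hcast - ((π:ℂ) * Complex.I) * hncast
    have hEmul : Complex.exp (Complex.I * (2 * (((⟨k, hkn⟩ : Fin n) : ℕ) + 1) - 1) * π / n) *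
        Complex.exp ((i : ℂ) * (2 * π * Complex.I / n)) = -1 := by
      rw [← Complex.exp_add, harg, Complex.exp_add, Complex.exp_pi_mul_I]
      have := Complex.exp_int_mul_two_pi_mul_I t
      rw [this]
      ring
    calc (μ : ℂ) * Complex.exp (Complex.I * (2 * (((⟨k, hkn⟩ : Fin n) : ℕ) + 1) - 1) * π / n) *
          h s * W
        = Complex.exp (Complex.I * (2 * (((⟨k, hkn⟩ : Fin n) : ℕ) + 1) - 1) * π / n) *
          ((μ : ℂ) * h s * W) := by ring
      _ = Complex.exp (Complex.I * (2 * (((⟨k, hkn⟩ : Fin n) : ℕ) + 1) - 1) * π / n) *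
          (-Complex.exp ((i : ℂ) * (2 * π * Complex.I / n))) := by rw [hζeq]
      _ = 1 := by rw [mul_neg, hEmul]; ring
  · rintro ⟨δ, hδ, k, hk⟩
    refine ⟨fun _ => δ, fun _ => hδ, ?_⟩
    have hprod : ∏ _i : Fin n, ((1 : ℂ) + δ) = (1 + δ)^n := by
      simp [Finset.prod_const, Finset.card_univ]
    rw [hprod]
    have hEn : Complex.exp (Complex.I * (2 * ((k : ℕ) + 1) - 1) * π / n) ^ n = -1 := by
      rw [← Complex.exp_nat_mul]
      have harg : (n : ℂ) * (Complex.I * (2 * ((k : ℕ) + 1) - 1) * π / n) =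
          ((2 * (k : ℕ) + 1 : ℕ) : ℂ) * (π * Complex.I) := by
        field_simp
        push_cast
        ring
      rw [harg, Complex.exp_nat_mul, Complex.exp_pi_mul_I]
      exact Odd.neg_one_pow ⟨(k : ℕ), by ring⟩
    have hpow := congrArg (fun z => z ^ n) hk
    simp only [mul_pow, one_pow] at hpow
    rw [hEn] at hpow
    linear_combination -hpow
end

section
/- Let w(θ) = log(1 + r e^{iθ}) for θ ∈ [0, 2π) with 0 < r < 1 (principal logarithm). Then the curvature of the curve θ ↦ w(θ) never changes sign; equivalently, the image of the circle |δ| = r under δ ↦ log(1+δ) is the boundary of a convex region. -/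
open Set Metric Real

lemma stmt17_inj {δ₁ δ₂ : ℂ} (h1 : ‖δ₁‖ < 1) (h2 : ‖δ₂‖ < 1)
    (h : Complex.log (1 + δ₁) = Complex.log (1 + δ₂)) : δ₁ = δ₂ := by
  have e1 : (1 : ℂ) + δ₁ ≠ 0 := by
    intro hc
    have : ‖δ₁‖ = 1 := by
      have : δ₁ = -1 := by linear_combination hc
      simp [this]
    linarith
  have e2 : (1 : ℂ) + δ₂ ≠ 0 := by
    intro hc
    have : ‖δ₂‖ = 1 := by
      have : δ₂ = -1 := by linear_combination hc
      simp [this]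
    linarith
  have := congrArg Complex.exp h
  rw [Complex.exp_log e1, Complex.exp_log e2] at this
  linear_combination this

lemma stmt17_slit {δ : ℂ} (h : ‖δ‖ < 1) : (1 + δ) ∈ Complex.slitPlane := by
  rw [Complex.mem_slitPlane_iff]
  left
  have h1 := Complex.abs_re_le_norm δ
  have h2 := abs_lt.mp (lt_of_le_of_lt h1 h)
  simp only [Complex.add_re, Complex.one_re]
  linarith [h2.1]

lemma stmt17_key (r : ℝ) (hr0 : 0 < r) (hr1 : r < 1) :
    (fun δ : ℂ => Complex.log (1 + δ)) '' Metric.closedBall (0 : ℂ) r =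
    {z : ℂ | Real.exp z.re + (1 - r^2) * Real.exp (-z.re) - 2 * Real.cos z.im ≤ 0
      ∧ z.im ∈ Icc (-(π/2)) (π/2)} := by
  ext z
  simp only [mem_image, mem_closedBall, Complex.dist_eq, sub_zero, mem_setOf_eq]
  constructor
  · rintro ⟨δ, hδ, rfl⟩
    have habs : ‖δ‖ ≤ r := by simpa using hδ
    have hlt1 : ‖δ‖ < 1 := lt_of_le_of_lt habs hr1
    have hslit := stmt17_slit hlt1
    have hw0 : (1 : ℂ) + δ ≠ 0 := Complex.slitPlane_ne_zero hslit
    have hwre : 0 < (1 + δ).re := by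
      have h1 := Complex.abs_re_le_norm δ
      have h2 := abs_lt.mp (lt_of_le_of_lt h1 hlt1)
      simp only [Complex.add_re, Complex.one_re]
      linarith [h2.1]
    set x := (Complex.log (1 + δ)).re with hx
    set y := (Complex.log (1 + δ)).im with hy
    have hexp : Complex.exp (Complex.log (1 + δ)) = 1 + δ := Complex.exp_log hw0
    have hre : (1 + δ).re = Real.exp x * Real.cos y := by
      rw [← hexp, Complex.exp_re]
    have him : (1 + δ).im = Real.exp x * Real.sin y := by
      rw [← hexp, Complex.exp_im]
    have hδre : δ.re = Real.exp x * Real.cos y - 1 := by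
      have : (1 + δ).re = 1 + δ.re := by simp
      linarith [hre, this]
    have hδim : δ.im = Real.exp x * Real.sin y := by
      have : (1 + δ).im = δ.im := by simp
      linarith [him, this]
    have hsq : ‖δ‖ ^ 2 = δ.re ^ 2 + δ.im ^ 2 := by
      rw [Complex.sq_norm, Complex.normSq_apply]; ring
    have hsc : Real.sin y ^ 2 + Real.cos y ^ 2 = 1 := Real.sin_sq_add_cos_sq y
    have hE : 0 < Real.exp x := Real.exp_pos x
    have hEneg : Real.exp (-x) = (Real.exp x)⁻¹ := by rw [Real.exp_neg]
    have hsq2 : Real.exp x ^ 2 - 2 * Real.exp x * Real.cos y + 1 ≤ r ^ 2 := by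
      have h1 : ‖δ‖ ^ 2 ≤ r ^ 2 := by nlinarith [norm_nonneg δ]
      rw [hsq, hδre, hδim] at h1
      nlinarith
    constructor
    · rw [hEneg]
      have := mul_le_mul_of_nonneg_right hsq2 (le_of_lt (inv_pos.mpr hE))
      have hEi : Real.exp x * (Real.exp x)⁻¹ = 1 := mul_inv_cancel₀ (ne_of_gt hE)
      nlinarith
    · have harg : |Complex.arg (1 + δ)| ≤ π / 2 :=
        Complex.abs_arg_le_pi_div_two_iff.mpr (le_of_lt hwre)
      have : y = Complex.arg (1 + δ) := by rw [hy, Complex.log_im]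
      rw [this]
      constructor
      · linarith [(abs_le.mp harg).1]
      · linarith [(abs_le.mp harg).2]
  · rintro ⟨hF, him1, him2⟩
    set x := z.re
    set y := z.im
    refine ⟨Complex.exp z - 1, ?_, ?_⟩
    · have hre : (Complex.exp z - 1).re = Real.exp x * Real.cos y - 1 := by
        simp [Complex.exp_re, x, y]
      have him : (Complex.exp z - 1).im = Real.exp x * Real.sin y := by
        simp [Complex.exp_im, x, y]
      have hsq : ‖Complex.exp z - 1‖ ^ 2
          = (Real.exp x * Real.cos y - 1) ^ 2 + (Real.exp x * Real.sin y) ^ 2 := by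
        rw [Complex.sq_norm, Complex.normSq_apply, hre, him]; ring
      have hsc : Real.sin y ^ 2 + Real.cos y ^ 2 = 1 := Real.sin_sq_add_cos_sq y
      have hE : 0 < Real.exp x := Real.exp_pos x
      have hEneg : Real.exp (-x) = (Real.exp x)⁻¹ := by rw [Real.exp_neg]
      rw [hEneg] at hF
      have hmul := mul_le_mul_of_nonneg_right hF (le_of_lt hE)
      have hEi : (Real.exp x)⁻¹ * Real.exp x = 1 := inv_mul_cancel₀ (ne_of_gt hE)
      have hmul2 : Real.exp x * Real.exp x + (1 - r^2) - 2 * Real.cos y * Real.exp x ≤ 0 := by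
        have heq : (Real.exp x + (1 - r^2) * (Real.exp x)⁻¹ - 2 * Real.cos y) * Real.exp x
            = Real.exp x * Real.exp x + (1 - r^2) * ((Real.exp x)⁻¹ * Real.exp x)
              - 2 * Real.cos y * Real.exp x := by ring
        rw [heq, hEi, mul_one] at hmul
        linarith
      have hsc2 : (Real.exp x)^2 * (Real.sin y^2 + Real.cos y^2) = (Real.exp x)^2 := by
        rw [hsc]; ring
      have hsq2 : ‖Complex.exp z - 1‖ ^ 2 ≤ r ^ 2 := by
        rw [hsq]; nlinarith [hmul2, hsc2]
      nlinarith [norm_nonneg (Complex.exp z - 1)]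
    · have h1 : (1 : ℂ) + (Complex.exp z - 1) = Complex.exp z := by ring
      rw [h1, Complex.log_exp (by linarith [Real.pi_gt_three]) (by linarith [Real.pi_gt_three])]

lemma stmt17_convexOn (r : ℝ) (hr1 : r < 1) (hr0 : 0 < r) :
    ConvexOn ℝ (Complex.im ⁻¹' Icc (-(π/2)) (π/2))
      (fun z : ℂ => Real.exp z.re + (1 - r^2) * Real.exp (-z.re) - 2 * Real.cos z.im) := by
  have hconv : Convex ℝ (Complex.im ⁻¹' Icc (-(π/2)) (π/2)) :=
    (convex_Icc _ _).linear_preimage Complex.imLm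
  refine ⟨hconv, fun z hz w hw a b ha hb hab => ?_⟩
  simp only [smul_eq_mul]
  have hre : (a • z + b • w).re = a * z.re + b * w.re := by
    simp [Complex.smul_re]
  have him : (a • z + b • w).im = a * z.im + b * w.im := by
    simp [Complex.smul_im]
  rw [hre, him]
  have h1 : Real.exp (a * z.re + b * w.re) ≤ a * Real.exp z.re + b * Real.exp w.re := by
    have := convexOn_exp.2 (mem_univ z.re) (mem_univ w.re) ha hb hab
    simpa [smul_eq_mul] using this
  have h2 : Real.exp (-(a * z.re + b * w.re))
      ≤ a * Real.exp (-z.re) + b * Real.exp (-w.re) := by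
    have := convexOn_exp.2 (mem_univ (-z.re)) (mem_univ (-w.re)) ha hb hab
    simp only [smul_eq_mul] at this
    have heq : a * -z.re + b * -w.re = -(a * z.re + b * w.re) := by ring
    rwa [heq] at this
  have h3 : a * Real.cos z.im + b * Real.cos w.im ≤ Real.cos (a * z.im + b * w.im) := by
    have := strictConcaveOn_cos_Icc.concaveOn.2 hz hw ha hb hab
    simpa [smul_eq_mul] using this
  have hr2 : (0:ℝ) ≤ 1 - r^2 := by nlinarith
  nlinarith [mul_le_mul_of_nonneg_left h2 hr2]

lemma stmt17_convex (r : ℝ) (hr0 : 0 < r) (hr1 : r < 1) :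
    Convex ℝ {z : ℂ | Real.exp z.re + (1 - r^2) * Real.exp (-z.re) - 2 * Real.cos z.im ≤ 0
      ∧ z.im ∈ Icc (-(π/2)) (π/2)} := by
  have h := (stmt17_convexOn r hr1 hr0).convex_le 0
  convert h using 1
  ext z
  simp only [mem_setOf_eq, mem_preimage, Set.sep_setOf]
  tauto

lemma stmt17_cont {δ : ℂ} (h : ‖δ‖ < 1) :
    ContinuousAt (fun δ : ℂ => Complex.log (1 + δ)) δ :=
  (continuousAt_clog (stmt17_slit h)).comp
    ((continuous_const.add continuous_id).continuousAt)

lemma stmt17_frontier (r : ℝ) (hr0 : 0 < r) (hr1 : r < 1) :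
    frontier ((fun δ : ℂ => Complex.log (1 + δ)) '' Metric.closedBall (0 : ℂ) r) =
      (fun δ : ℂ => Complex.log (1 + δ)) '' Metric.sphere (0 : ℂ) r := by
  set φ := fun δ : ℂ => Complex.log (1 + δ) with hφ
  set K := φ '' Metric.closedBall (0:ℂ) r with hK
  have hcont : ContinuousOn φ (Metric.closedBall (0:ℂ) r) := by
    intro δ hδ
    have : ‖δ‖ < 1 := by
      simp only [Metric.mem_closedBall, Complex.dist_eq, sub_zero] at hδ
      linarith
    exact (stmt17_cont this).continuousWithinAt
  have hcomp : IsCompact K := (isCompact_closedBall _ _).image_of_continuousOn hcont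
  -- interior points
  have hint : ∀ δ : ℂ, ‖δ‖ < r → φ δ ∈ interior K := by
    intro δ hδ
    have hlt1 : ‖δ‖ < 1 := hδ.trans hr1
    have h0 : (1:ℂ) + δ ≠ 0 := Complex.slitPlane_ne_zero (stmt17_slit hlt1)
    have hsd : HasStrictDerivAt φ (1 / (1 + δ)) δ := by
      have h1 : HasStrictDerivAt (fun δ : ℂ => 1 + δ) 1 δ := by
        simpa using (hasStrictDerivAt_id δ).const_add (1:ℂ)
      exact h1.clog (stmt17_slit hlt1)
    have hne : (1:ℂ) / (1 + δ) ≠ 0 := div_ne_zero one_ne_zero h0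
    rw [mem_interior_iff_mem_nhds, ← hsd.map_nhds_eq hne, Filter.mem_map]
    have hball : Metric.ball (0:ℂ) r ∈ nhds δ := Metric.isOpen_ball.mem_nhds
      (by simp only [Metric.mem_ball, Complex.dist_eq, sub_zero]; exact hδ)
    exact Filter.mem_of_superset hball
      (fun x hx => mem_image_of_mem φ (Metric.ball_subset_closedBall hx))
  -- boundary points not in interior
  have hbd : ∀ δ : ℂ, ‖δ‖ = r → φ δ ∉ interior K := by
    intro δ hδ hin
    have hKn : K ∈ nhds (φ δ) := mem_interior_iff_mem_nhds.mp hin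
    have hlt1 : ‖δ‖ < 1 := by rw [hδ]; exact hr1
    have hto : Filter.Tendsto (fun t : ℝ => φ ((t:ℂ) * δ)) (nhdsWithin 1 (Set.Ioi (1:ℝ)))
        (nhds (φ δ)) := by
      have h1 : Filter.Tendsto (fun t : ℝ => (t:ℂ) * δ) (nhds 1) (nhds δ) := by
        have hc : Continuous (fun t : ℝ => (t:ℂ) * δ) :=
          Complex.continuous_ofReal.mul continuous_const
        simpa using hc.tendsto (1:ℝ)
      exact ((stmt17_cont hlt1).tendsto.comp h1).mono_left (nhdsWithin_le_nhds : nhdsWithin (1:ℝ) (Set.Ioi (1:ℝ)) ≤ nhds 1)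
    have hev1 : ∀ᶠ (t : ℝ) in nhdsWithin (1:ℝ) (Set.Ioi (1:ℝ)), φ ((t:ℂ) * δ) ∈ K :=
      hto.eventually hKn
    have h1r : (1:ℝ) < 1/r := by rw [lt_div_iff₀ hr0]; linarith
    have hev2 : ∀ᶠ t in nhdsWithin (1:ℝ) (Set.Ioi (1:ℝ)), t < 1/r :=
      Filter.Eventually.filter_mono nhdsWithin_le_nhds (eventually_lt_nhds h1r)
    have hev3 : ∀ᶠ t in nhdsWithin (1:ℝ) (Set.Ioi (1:ℝ)), (1:ℝ) < t :=
      self_mem_nhdsWithin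
    obtain ⟨t, ⟨htK, htlt⟩, ht1⟩ := ((hev1.and hev2).and hev3).exists
    obtain ⟨δ'', hδ'', heq⟩ := htK
    have habs'' : ‖δ''‖ ≤ r := by
      simpa [Complex.dist_eq] using hδ''
    have habst : ‖(t:ℂ) * δ‖ = t * r := by
      simp [map_mul, hδ, Complex.norm_real, abs_of_pos (by linarith : (0:ℝ) < t)]
    have hlt1' : ‖(t:ℂ) * δ‖ < 1 := by
      rw [habst]
      calc t * r < (1/r) * r := by nlinarith
        _ = 1 := by field_simp
    have := stmt17_inj (lt_of_le_of_lt habs'' hr1) hlt1' heq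
    rw [this, habst] at habs''
    nlinarith
  rw [hcomp.isClosed.frontier_eq]
  ext z
  constructor
  · rintro ⟨⟨δ, hδ, rfl⟩, hni⟩
    have habs : ‖δ‖ ≤ r := by simpa [Complex.dist_eq] using hδ
    rcases eq_or_lt_of_le habs with heq | hlt
    · exact ⟨δ, by simpa [Complex.dist_eq] using heq, rfl⟩
    · exact absurd (hint δ hlt) hni
  · rintro ⟨δ, hδ, rfl⟩
    have habs : ‖δ‖ = r := by simpa [Complex.dist_eq] using hδ
    exact ⟨mem_image_of_mem φ (Metric.sphere_subset_closedBall hδ), hbd δ habs⟩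

theorem stmt_17 (r : ℝ) (hr0 : 0 < r) (hr1 : r < 1) :
    Convex ℝ ((fun δ : ℂ => Complex.log (1 + δ)) '' Metric.closedBall (0 : ℂ) r) ∧
    frontier ((fun δ : ℂ => Complex.log (1 + δ)) '' Metric.closedBall (0 : ℂ) r) =
      (fun δ : ℂ => Complex.log (1 + δ)) '' Metric.sphere (0 : ℂ) r := by
  constructor
  · rw [stmt17_key r hr0 hr1]
    exact stmt17_convex r hr0 hr1
  · exact stmt17_frontier r hr0 hr1
end
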